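/- Asymptotic value of θ for a forward Euler fine grid: let m ≥ 1, let f : ℝ → ℝ be continuously differentiable, and let u_0 ∈ ℝ satisfy f(u_0) ≠ 0 and f′(u_0) ≠ 0. For h > 0 let u_0(h) = u_0 and u_{i+1}(h) = u_i(h) + h·f(u_i(h)) be the forward Euler iterates, and when f(u_m(h)) ≠ f(u_0) define θ(h) = (f(u_m(h)) − (1/m)∑_{i=0}^{m−1} f(u_i(h))) / (f(u_m(h)) − f(u_0)). Then there exists h_0 > 0 such that θ(h) is defined for all 0 < h < h_0, and θ(h) → (m+1)/(2m) as h → 0⁺. -/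

import Mathlib

def fe (f : ℝ → ℝ) (u0 h : ℝ) : ℕ → ℝ
  | 0 => u0
  | (i + 1) => fe f u0 h i + h * f (fe f u0 h i)

lemma fe_zero (f : ℝ → ℝ) (u0 : ℝ) : ∀ i, fe f u0 0 i = u0
  | 0 => rfl
  | (i + 1) => by simp [fe, fe_zero f u0 i]

lemma fe_hasDerivAt (f : ℝ → ℝ) (hf : ContDiff ℝ 1 f) (u0 : ℝ) :
    ∀ i, HasDerivAt (fun h => fe f u0 h i) (i * f u0) 0
  | 0 => by rw [Nat.cast_zero, zero_mul]; exact hasDerivAt_const (0 : ℝ) u0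
  | (i + 1) => by
      have IH := fe_hasDerivAt f hf u0 i
      have hdf : HasDerivAt f (deriv f u0) (fe f u0 0 i) := by
        rw [fe_zero]
        exact (hf.differentiable one_ne_zero u0).hasDerivAt
      have hcomp : HasDerivAt (fun h => f (fe f u0 h i)) (deriv f u0 * (i * f u0)) 0 :=
        hdf.comp 0 IH
      have hid : HasDerivAt (fun h : ℝ => h) 1 0 := hasDerivAt_id 0
      have htot := IH.add (hid.mul hcomp)
      have : (fun h => fe f u0 h (i + 1)) =
          fun h => fe f u0 h i + h * f (fe f u0 h i) := by
        funext h; rfl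
      rw [this]
      convert htot using 1
      · rfl
      · rfl
      · rfl
      rw [fe_zero]
      push_cast
      ring

lemma phi_hasDerivAt (f : ℝ → ℝ) (hf : ContDiff ℝ 1 f) (u0 : ℝ) (i : ℕ) :
    HasDerivAt (fun h => f (fe f u0 h i)) (deriv f u0 * f u0 * i) 0 := by
  have hdf : HasDerivAt f (deriv f u0) (fe f u0 0 i) := by
    rw [fe_zero]; exact (hf.differentiable one_ne_zero u0).hasDerivAt
  have := hdf.comp 0 (fe_hasDerivAt f hf u0 i)
  convert this using 1
  · rfl
  · rfl
  · rfl
  ring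

theorem stmt13 (m : ℕ) (hm : 1 ≤ m) (f : ℝ → ℝ) (hf : ContDiff ℝ 1 f)
    (u0 : ℝ) (hf0 : f u0 ≠ 0) (hf'0 : deriv f u0 ≠ 0) :
    ∃ h0 > 0,
      (∀ h : ℝ, 0 < h → h < h0 → f (fe f u0 h m) ≠ f u0) ∧
      Filter.Tendsto
        (fun h : ℝ =>
          (f (fe f u0 h m) - (1 / (m : ℝ)) * ∑ i ∈ Finset.range m, f (fe f u0 h i))
            / (f (fe f u0 h m) - f u0))
        (nhdsWithin 0 (Set.Ioi 0))
        (nhds (((m : ℝ) + 1) / (2 * (m : ℝ)))) := by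
  have hmR : (m : ℝ) ≠ 0 := Nat.cast_ne_zero.mpr (by omega)
  set c : ℝ := deriv f u0 * f u0 with hc
  have hcne : c ≠ 0 := mul_ne_zero hf'0 hf0
  set N : ℝ → ℝ := fun h =>
    f (fe f u0 h m) - (1 / (m : ℝ)) * ∑ i ∈ Finset.range m, f (fe f u0 h i) with hNdef
  set D : ℝ → ℝ := fun h => f (fe f u0 h m) - f u0 with hDdef
  have hN0 : N 0 = 0 := by
    simp only [hNdef, fe_zero, Finset.sum_const, Finset.card_range, nsmul_eq_mul]
    field_simp
    ring
  have hD0 : D 0 = 0 := by simp [hDdef, fe_zero]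
  have hsum : HasDerivAt (fun h => ∑ i ∈ Finset.range m, f (fe f u0 h i))
      (∑ i ∈ Finset.range m, c * i) 0 :=
    HasDerivAt.fun_sum fun i _ => phi_hasDerivAt f hf u0 i
  have hsumval : (∑ i ∈ Finset.range m, c * (i : ℝ)) = c * (m * (m - 1) / 2) := by
    rw [← Finset.mul_sum]
    congr 1
    have h := congrArg (Nat.cast : ℕ → ℝ) (Finset.sum_range_id_mul_two m)
    push_cast [Nat.cast_sub hm] at h
    linarith
  have hN : HasDerivAt N (c * ((m + 1) / 2)) 0 := by
    have := (phi_hasDerivAt f hf u0 m).sub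
      ((hasDerivAt_const (0:ℝ) (1 / (m:ℝ))).mul hsum)
    convert this using 1
    · rfl
    · rfl
    · rfl
    rw [hsumval]
    field_simp
    ring
  have hD : HasDerivAt D (c * m) 0 := by
    have := (phi_hasDerivAt f hf u0 m).sub (hasDerivAt_const (0:ℝ) (f u0))
    convert this using 1
    · rfl
    · rfl
    · rfl
    ring
  have hmono : nhdsWithin (0:ℝ) (Set.Ioi 0) ≤ nhdsWithin 0 {(0:ℝ)}ᶜ :=
    nhdsWithin_mono 0 fun x hx => ne_of_gt hx
  have hNs : Filter.Tendsto (fun h => N h / h) (nhdsWithin 0 (Set.Ioi 0))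
      (nhds (c * ((m + 1) / 2))) := by
    have := (hasDerivAt_iff_tendsto_slope.mp hN).mono_left hmono
    refine this.congr fun h => ?_
    simp [slope_def_field, hN0, div_eq_inv_mul]
  have hDs : Filter.Tendsto (fun h => D h / h) (nhdsWithin 0 (Set.Ioi 0))
      (nhds (c * m)) := by
    have := (hasDerivAt_iff_tendsto_slope.mp hD).mono_left hmono
    refine this.congr fun h => ?_
    simp [slope_def_field, hD0, div_eq_inv_mul]
  have hcm : c * m ≠ 0 := mul_ne_zero hcne hmR
  have hevD : ∀ᶠ h in nhdsWithin (0:ℝ) (Set.Ioi 0), D h ≠ 0 := by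
    have h1 : ∀ᶠ h in nhdsWithin (0:ℝ) (Set.Ioi 0), D h / h ≠ 0 :=
      hDs.eventually_ne hcm
    filter_upwards [h1, self_mem_nhdsWithin] with h hh hpos
    intro h0
    exact hh (by rw [h0]; simp)
  obtain ⟨h0, hh0pos, hball⟩ : ∃ ε > 0, ∀ h : ℝ, 0 < h → h < ε → D h ≠ 0 := by
    rw [eventually_nhdsWithin_iff, Metric.eventually_nhds_iff] at hevD
    obtain ⟨ε, hε, hε2⟩ := hevD
    exact ⟨ε, hε, fun h hp hl => hε2 (by simpa [abs_of_pos hp] using hl) hp⟩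
  refine ⟨h0, hh0pos, fun h hp hl => sub_ne_zero.mp (hball h hp hl), ?_⟩
  have hdiv := hNs.div hDs hcm
  have hlim : c * ((m + 1) / 2) / (c * m) = ((m : ℝ) + 1) / (2 * m) := by
    field_simp
  rw [hlim] at hdiv
  refine hdiv.congr' ?_
  filter_upwards [self_mem_nhdsWithin] with h hp
  have hne : h ≠ 0 := ne_of_gt hp
  simp only [Pi.div_apply]
  rw [div_div_div_cancel_right₀ hne]
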